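/- Let Q, A, S_e, S_d, X, Y be finite random variables with joint law P_Q·P_{A|Q}·P_{S_e,S_d|A}·P_{X|A,S_e,Q}·P_{Y|X,S_e,S_d}. Then I(A,X; Y,S_d | Q) − I(X; S_e | A, Q) ≤ I(A,X; Y,S_d) − I(X; S_e | A), where the unconditioned quantities are computed for the marginal of (A,S_e,S_d,X,Y). -/

import Mathlib

open Finset
noncomputable section
namespace IT

variable {Ω : Type} [Fintype Ω]

/-- Marginal probability mass of the event `X = a` under the weight function `p`. -/
def marg {α : Type} [Fintype α] [DecidableEq α]
    (p : Ω → ℝ) (X : Ω → α) (a : α) : ℝ :=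
  ∑ ω, if X ω = a then p ω else 0

/-- Shannon entropy (natural logarithm) of the random variable `X`. -/
def ent {α : Type} [Fintype α] [DecidableEq α] (p : Ω → ℝ) (X : Ω → α) : ℝ :=
  ∑ a, Real.negMulLog (marg p X a)

/-- Conditional entropy `H(X | Y)`. -/
def condEnt {α β : Type} [Fintype α] [DecidableEq α] [Fintype β] [DecidableEq β]
    (p : Ω → ℝ) (X : Ω → α) (Y : Ω → β) : ℝ :=
  ent p (fun ω => (X ω, Y ω)) - ent p Y

/-- Mutual information `I(X; Y)`. -/
def mi {α β : Type} [Fintype α] [DecidableEq α] [Fintype β] [DecidableEq β]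
    (p : Ω → ℝ) (X : Ω → α) (Y : Ω → β) : ℝ :=
  ent p X + ent p Y - ent p (fun ω => (X ω, Y ω))

/-- Conditional mutual information `I(X; Y | Z)`. -/
def condMI {α β γ : Type} [Fintype α] [DecidableEq α] [Fintype β] [DecidableEq β]
    [Fintype γ] [DecidableEq γ]
    (p : Ω → ℝ) (X : Ω → α) (Y : Ω → β) (Z : Ω → γ) : ℝ :=
  condEnt p X Z + condEnt p Y Z - condEnt p (fun ω => (X ω, Y ω)) Z

/-- `X` and `Y` are conditionally independent given `Z`:
`P(X=a, Z=c) ⬝ P(Y=b, Z=c) = P(X=a, Y=b, Z=c) ⬝ P(Z=c)`. -/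
def CondIndep {α β γ : Type} [Fintype α] [DecidableEq α] [Fintype β] [DecidableEq β]
    [Fintype γ] [DecidableEq γ]
    (p : Ω → ℝ) (X : Ω → α) (Y : Ω → β) (Z : Ω → γ) : Prop :=
  ∀ a b c,
    marg p (fun ω => (X ω, Z ω)) (a, c) * marg p (fun ω => (Y ω, Z ω)) (b, c) =
    marg p (fun ω => (X ω, Y ω, Z ω)) (a, b, c) * marg p Z c

/-- `p` is a probability mass function on `Ω`. -/
def IsProb (p : Ω → ℝ) : Prop := (∀ ω, 0 ≤ p ω) ∧ ∑ ω, p ω = 1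

set_option linter.unusedSectionVars false

section Aux
variable {α β γ δ : Type} [Fintype α] [DecidableEq α] [Fintype β] [DecidableEq β]
  [Fintype γ] [DecidableEq γ] [Fintype δ] [DecidableEq δ]

lemma sum_ite_const {ι M : Type*} [Fintype ι] [AddCommMonoid M] (c : Prop) [Decidable c]
    (f : ι → M) : (∑ i, if c then f i else 0) = if c then ∑ i, f i else 0 := by
  split <;> simp

lemma marg_id [DecidableEq Ω] (p : Ω → ℝ) (v : Ω) : marg p (fun ω => ω) v = p v := by
  rw [marg]
  simp

lemma marg_nonneg {p : Ω → ℝ} (hp : ∀ ω, 0 ≤ p ω) (X : Ω → α) (a : α) :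
    0 ≤ marg p X a :=
  Finset.sum_nonneg fun ω _ => by split_ifs; exacts [hp ω, le_rfl]

lemma marg_comp_inj {p : Ω → ℝ} {f : α → β} (hf : Function.Injective f) (X : Ω → α) (a : α) :
    marg p (fun ω => f (X ω)) (f a) = marg p X a := by
  unfold marg
  exact Finset.sum_congr rfl fun ω _ => by simp [hf.eq_iff]

lemma marg_comp_eq_zero {p : Ω → ℝ} (f : α → β) (X : Ω → α) {b : β}
    (hb : ∀ a, f a ≠ b) : marg p (fun ω => f (X ω)) b = 0 :=
  Finset.sum_eq_zero fun ω _ => by simp [hb]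

lemma ent_comp_inj (p : Ω → ℝ) {f : α → β} (hf : Function.Injective f) (X : Ω → α) :
    ent p (fun ω => f (X ω)) = ent p X := by
  unfold ent
  rw [← Finset.sum_subset (Finset.subset_univ ((Finset.univ : Finset α).image f))
      (fun b _ hb => ?_)]
  · rw [Finset.sum_image (fun a _ a' _ h => hf h)]
    exact Finset.sum_congr rfl fun a _ => by rw [marg_comp_inj hf]
  · rw [marg_comp_eq_zero f X, Real.negMulLog_zero]
    intro a hab
    exact hb (Finset.mem_image.2 ⟨a, Finset.mem_univ a, hab⟩)

variable (p : Ω → ℝ) (X : Ω → α) (Y : Ω → β) (Z : Ω → γ)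

lemma marg_proj_XZ (a : α) (c : γ) :
    marg p (fun ω => (X ω, Z ω)) (a, c)
      = ∑ b, marg p (fun ω => (X ω, Y ω, Z ω)) (a, b, c) := by
  unfold marg
  rw [Finset.sum_comm]
  refine Finset.sum_congr rfl fun ω _ => ?_
  by_cases hx : X ω = a <;> by_cases hz : Z ω = c <;> simp [Prod.ext_iff, hx, hz]

lemma marg_proj_YZ (b : β) (c : γ) :
    marg p (fun ω => (Y ω, Z ω)) (b, c)
      = ∑ a, marg p (fun ω => (X ω, Y ω, Z ω)) (a, b, c) := by
  unfold marg
  rw [Finset.sum_comm]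
  refine Finset.sum_congr rfl fun ω _ => ?_
  by_cases hy : Y ω = b <;> by_cases hz : Z ω = c <;> simp [Prod.ext_iff, hy, hz]

lemma marg_proj_snd (W : Ω → α) (c : γ) :
    marg p Z c = ∑ a, marg p (fun ω => (W ω, Z ω)) (a, c) := by
  unfold marg
  rw [Finset.sum_comm]
  refine Finset.sum_congr rfl fun ω _ => ?_
  by_cases hz : Z ω = c <;> simp [Prod.ext_iff, hz]

end Aux

section Aux2
variable {α β γ δ : Type} [Fintype α] [DecidableEq α] [Fintype β] [DecidableEq β]
  [Fintype γ] [DecidableEq γ] [Fintype δ] [DecidableEq δ]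

lemma neg_sum_mul_log {ι : Type*} [Fintype ι] (f : ι → ℝ) (u : ℝ) (h : ∑ i, f i = u) :
    Real.negMulLog u = ∑ i, -(f i * Real.log u) := by
  subst h
  rw [Real.negMulLog, neg_mul, Finset.sum_mul, ← Finset.sum_neg_distrib]

lemma sum_rot {f : α → β → γ → ℝ} :
    ∑ a, ∑ b, ∑ c, f a b c = ∑ c, ∑ a, ∑ b, f a b c := by
  have h : ∀ a, ∑ b, ∑ c, f a b c = ∑ c, ∑ b, f a b c := fun a => Finset.sum_comm
  simp_rw [h]
  exact Finset.sum_comm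

variable (p : Ω → ℝ) (X : Ω → α) (Y : Ω → β) (Z : Ω → γ)

lemma ent_XZ :
    ent p (fun ω => (X ω, Z ω)) = ∑ a, ∑ b, ∑ c,
      -(marg p (fun ω => (X ω, Y ω, Z ω)) (a, b, c)
        * Real.log (marg p (fun ω => (X ω, Z ω)) (a, c))) := by
  rw [ent, Fintype.sum_prod_type]
  refine Finset.sum_congr rfl fun a _ => ?_
  rw [Finset.sum_comm]
  refine Finset.sum_congr rfl fun c _ => ?_
  exact neg_sum_mul_log _ _ (marg_proj_XZ p X Y Z a c).symm

lemma ent_YZ :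
    ent p (fun ω => (Y ω, Z ω)) = ∑ a, ∑ b, ∑ c,
      -(marg p (fun ω => (X ω, Y ω, Z ω)) (a, b, c)
        * Real.log (marg p (fun ω => (Y ω, Z ω)) (b, c))) := by
  rw [ent, Fintype.sum_prod_type]
  conv_rhs => rw [sum_rot, sum_rot]
  exact Finset.sum_congr rfl fun b _ => Finset.sum_congr rfl fun c _ =>
    neg_sum_mul_log _ _ (marg_proj_YZ p X Y Z b c).symm

lemma ent_Z :
    ent p Z = ∑ a, ∑ b, ∑ c,
      -(marg p (fun ω => (X ω, Y ω, Z ω)) (a, b, c) * Real.log (marg p Z c)) := by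
  rw [ent, sum_rot]
  refine Finset.sum_congr rfl fun c _ => ?_
  have h : ∑ ab : α × β, marg p (fun ω => (X ω, Y ω, Z ω)) (ab.1, ab.2, c) = marg p Z c := by
    rw [Fintype.sum_prod_type]
    exact ((marg_proj_snd p Z X c).trans
      (Finset.sum_congr rfl fun a _ => marg_proj_XZ p X Y Z a c)).symm
  rw [neg_sum_mul_log _ _ h, Fintype.sum_prod_type]

lemma ent_XYZ :
    ent p (fun ω => (X ω, Y ω, Z ω)) = ∑ a, ∑ b, ∑ c,
      -(marg p (fun ω => (X ω, Y ω, Z ω)) (a, b, c)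
        * Real.log (marg p (fun ω => (X ω, Y ω, Z ω)) (a, b, c))) := by
  rw [ent, Fintype.sum_prod_type]
  refine Finset.sum_congr rfl fun a _ => ?_
  rw [Fintype.sum_prod_type]
  refine Finset.sum_congr rfl fun b _ => Finset.sum_congr rfl fun c _ => ?_
  rw [Real.negMulLog, neg_mul]

end Aux2

section Core
variable {α β γ δ : Type} [Fintype α] [DecidableEq α] [Fintype β] [DecidableEq β]
  [Fintype γ] [DecidableEq γ] [Fintype δ] [DecidableEq δ]

variable (p : Ω → ℝ) (X : Ω → α) (Y : Ω → β) (Z : Ω → γ)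

lemma condMI_eq_sum :
    condMI p X Y Z = ∑ a, ∑ b, ∑ c,
      marg p (fun ω => (X ω, Y ω, Z ω)) (a, b, c) *
        (Real.log (marg p (fun ω => (X ω, Y ω, Z ω)) (a, b, c)) + Real.log (marg p Z c)
         - Real.log (marg p (fun ω => (X ω, Z ω)) (a, c))
         - Real.log (marg p (fun ω => (Y ω, Z ω)) (b, c))) := by
  have h5 : ent p (fun ω => ((X ω, Y ω), Z ω)) = ent p (fun ω => (X ω, Y ω, Z ω)) :=
    ent_comp_inj p (f := fun t : α × β × γ => ((t.1, t.2.1), t.2.2))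
      (Function.LeftInverse.injective (g := fun s => (s.1.1, s.1.2, s.2)) fun _ => rfl)
      (fun ω => (X ω, Y ω, Z ω))
  simp only [condMI, condEnt]
  rw [h5, ent_XZ p X Y Z, ent_YZ p X Y Z, ent_XYZ p X Y Z, ent_Z p X Y Z]
  simp only [← Finset.sum_sub_distrib, ← Finset.sum_add_distrib]
  exact Finset.sum_congr rfl fun a _ => Finset.sum_congr rfl fun b _ =>
    Finset.sum_congr rfl fun c _ => by ring

lemma term_lb {r xz yz z : ℝ} (hr : 0 ≤ r) (hxz : r ≤ xz) (hyz : r ≤ yz) (hz : r ≤ z)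
    (hxz0 : 0 ≤ xz) (hyz0 : 0 ≤ yz) (hz0 : 0 ≤ z) :
    r - xz * yz / z ≤ r * (Real.log r + Real.log z - Real.log xz - Real.log yz) := by
  rcases hr.eq_or_lt with rfl | hpos
  · have h : 0 ≤ xz * yz / z := div_nonneg (mul_nonneg hxz0 hyz0) hz0
    simp only [zero_mul, zero_sub]
    linarith
  · have hxzp : 0 < xz := lt_of_lt_of_le hpos hxz
    have hyzp : 0 < yz := lt_of_lt_of_le hpos hyz
    have hzp : 0 < z := lt_of_lt_of_le hpos hz
    have hlog : Real.log (xz * yz / (r * z)) ≤ xz * yz / (r * z) - 1 :=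
      Real.log_le_sub_one_of_pos (by positivity)
    have h3 := mul_le_mul_of_nonneg_left hlog hpos.le
    have h4 : r * Real.log (xz * yz / (r * z))
        = r * (Real.log xz + Real.log yz - Real.log r - Real.log z) := by
      rw [Real.log_div (by positivity) (by positivity), Real.log_mul hxzp.ne' hyzp.ne',
        Real.log_mul hpos.ne' hzp.ne']
      ring
    have h5 : r * (xz * yz / (r * z) - 1) = xz * yz / z - r := by
      field_simp
    rw [h4, h5] at h3
    nlinarith [h3]

lemma sum_lb_zero :
    (∑ a, ∑ b, ∑ c, (marg p (fun ω => (X ω, Y ω, Z ω)) (a, b, c)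
      - marg p (fun ω => (X ω, Z ω)) (a, c) * marg p (fun ω => (Y ω, Z ω)) (b, c)
        / marg p Z c)) = 0 := by
  rw [sum_rot]
  refine Finset.sum_eq_zero fun c _ => ?_
  simp only [Finset.sum_sub_distrib]
  have e1 : ∑ a, ∑ b, marg p (fun ω => (X ω, Y ω, Z ω)) (a, b, c) = marg p Z c :=
    ((marg_proj_snd p Z X c).trans
      (Finset.sum_congr rfl fun a _ => marg_proj_XZ p X Y Z a c)).symm
  have e2 : ∑ a, ∑ b, marg p (fun ω => (X ω, Z ω)) (a, c)
      * marg p (fun ω => (Y ω, Z ω)) (b, c) / marg p Z c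
      = marg p Z c * marg p Z c / marg p Z c := by
    calc ∑ a, ∑ b, marg p (fun ω => (X ω, Z ω)) (a, c)
          * marg p (fun ω => (Y ω, Z ω)) (b, c) / marg p Z c
        = ∑ a, (marg p (fun ω => (X ω, Z ω)) (a, c) / marg p Z c)
            * ∑ b, marg p (fun ω => (Y ω, Z ω)) (b, c) := by
          refine Finset.sum_congr rfl fun a _ => ?_
          rw [Finset.mul_sum]
          exact Finset.sum_congr rfl fun b _ => by ring
      _ = (∑ a, marg p (fun ω => (X ω, Z ω)) (a, c))
            * (∑ b, marg p (fun ω => (Y ω, Z ω)) (b, c)) / marg p Z c := by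
          rw [← Finset.sum_mul, ← Finset.sum_div, div_mul_eq_mul_div]
      _ = marg p Z c * marg p Z c / marg p Z c := by
          rw [← marg_proj_snd p Z X c, ← marg_proj_snd p Z Y c]
  rw [e1, e2]
  by_cases h : marg p Z c = 0
  · simp [h]
  · field_simp
    ring

lemma condMI_nonneg (hp : ∀ ω, 0 ≤ p ω) : 0 ≤ condMI p X Y Z := by
  rw [condMI_eq_sum]
  rw [← sum_lb_zero p X Y Z]
  refine Finset.sum_le_sum fun a _ => Finset.sum_le_sum fun b _ =>
    Finset.sum_le_sum fun c _ => ?_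
  have hJ0 : 0 ≤ marg p (fun ω => (X ω, Y ω, Z ω)) (a, b, c) := marg_nonneg hp _ _
  have hxz : marg p (fun ω => (X ω, Y ω, Z ω)) (a, b, c)
      ≤ marg p (fun ω => (X ω, Z ω)) (a, c) := by
    rw [marg_proj_XZ p X Y Z a c]
    exact Finset.single_le_sum (f := fun b' => marg p (fun ω => (X ω, Y ω, Z ω)) (a, b', c))
      (fun b' _ => marg_nonneg hp _ _) (Finset.mem_univ b)
  have hyz : marg p (fun ω => (X ω, Y ω, Z ω)) (a, b, c)
      ≤ marg p (fun ω => (Y ω, Z ω)) (b, c) := by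
    rw [marg_proj_YZ p X Y Z b c]
    exact Finset.single_le_sum (f := fun a' => marg p (fun ω => (X ω, Y ω, Z ω)) (a', b, c))
      (fun a' _ => marg_nonneg hp _ _) (Finset.mem_univ a)
  have hz : marg p (fun ω => (X ω, Y ω, Z ω)) (a, b, c) ≤ marg p Z c := by
    refine le_trans hxz ?_
    rw [marg_proj_snd p Z X c]
    exact Finset.single_le_sum (f := fun a' => marg p (fun ω => (X ω, Z ω)) (a', c))
      (fun a' _ => marg_nonneg hp _ _) (Finset.mem_univ a)
  exact term_lb hJ0 hxz hyz hz (marg_nonneg hp _ _) (marg_nonneg hp _ _) (marg_nonneg hp _ _)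

lemma condMI_eq_zero_of_condIndep (hp : ∀ ω, 0 ≤ p ω) (h : CondIndep p X Y Z) :
    condMI p X Y Z = 0 := by
  rw [condMI_eq_sum]
  refine Finset.sum_eq_zero fun a _ => Finset.sum_eq_zero fun b _ =>
    Finset.sum_eq_zero fun c _ => ?_
  rcases (marg_nonneg hp (fun ω => (X ω, Y ω, Z ω)) (a, b, c)).eq_or_lt with h0 | hpos
  · rw [← h0, zero_mul]
  · have hxz : marg p (fun ω => (X ω, Y ω, Z ω)) (a, b, c)
        ≤ marg p (fun ω => (X ω, Z ω)) (a, c) := by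
      rw [marg_proj_XZ p X Y Z a c]
      exact Finset.single_le_sum (f := fun b' => marg p (fun ω => (X ω, Y ω, Z ω)) (a, b', c))
        (fun b' _ => marg_nonneg hp _ _) (Finset.mem_univ b)
    have hyz : marg p (fun ω => (X ω, Y ω, Z ω)) (a, b, c)
        ≤ marg p (fun ω => (Y ω, Z ω)) (b, c) := by
      rw [marg_proj_YZ p X Y Z b c]
      exact Finset.single_le_sum (f := fun a' => marg p (fun ω => (X ω, Y ω, Z ω)) (a', b, c))
        (fun a' _ => marg_nonneg hp _ _) (Finset.mem_univ a)
    have hz : marg p (fun ω => (X ω, Y ω, Z ω)) (a, b, c) ≤ marg p Z c := by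
      refine le_trans hxz ?_
      rw [marg_proj_snd p Z X c]
      exact Finset.single_le_sum (f := fun a' => marg p (fun ω => (X ω, Z ω)) (a', c))
        (fun a' _ => marg_nonneg hp _ _) (Finset.mem_univ a)
    have hxzp := lt_of_lt_of_le hpos hxz
    have hyzp := lt_of_lt_of_le hpos hyz
    have hzp := lt_of_lt_of_le hpos hz
    have hlog : Real.log (marg p (fun ω => (X ω, Z ω)) (a, c))
        + Real.log (marg p (fun ω => (Y ω, Z ω)) (b, c))
        = Real.log (marg p (fun ω => (X ω, Y ω, Z ω)) (a, b, c)) + Real.log (marg p Z c) := by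
      rw [← Real.log_mul hxzp.ne' hyzp.ne', ← Real.log_mul hpos.ne' hzp.ne', h a b c]
    rw [show Real.log (marg p (fun ω => (X ω, Y ω, Z ω)) (a, b, c)) + Real.log (marg p Z c)
         - Real.log (marg p (fun ω => (X ω, Z ω)) (a, c))
         - Real.log (marg p (fun ω => (Y ω, Z ω)) (b, c)) = 0 from by linarith, mul_zero]

lemma ent_unit (h1 : ∑ ω, p ω = 1) : ent p (fun _ => ()) = 0 := by
  have : marg p (fun _ => ()) () = 1 := by rw [marg]; simpa using h1
  rw [ent]
  simp [this]

lemma mi_eq_condMI_unit (h1 : ∑ ω, p ω = 1) :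
    mi p X Y = condMI p X Y (fun _ => ()) := by
  have e1 : ent p (fun ω => (X ω, ())) = ent p X :=
    ent_comp_inj p (f := fun a : α => (a, ()))
      (Function.LeftInverse.injective (g := Prod.fst) fun _ => rfl) X
  have e2 : ent p (fun ω => (Y ω, ())) = ent p Y :=
    ent_comp_inj p (f := fun b : β => (b, ()))
      (Function.LeftInverse.injective (g := Prod.fst) fun _ => rfl) Y
  have e3 : ent p (fun ω => ((X ω, Y ω), ())) = ent p (fun ω => (X ω, Y ω)) :=
    ent_comp_inj p (f := fun t : α × β => (t, ()))
      (Function.LeftInverse.injective (g := Prod.fst) fun _ => rfl) (fun ω => (X ω, Y ω))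
  simp only [mi, condMI, condEnt]
  rw [e1, e2, e3, ent_unit p h1]
  ring

lemma mi_nonneg (hp : ∀ ω, 0 ≤ p ω) (h1 : ∑ ω, p ω = 1) : 0 ≤ mi p X Y := by
  rw [mi_eq_condMI_unit p X Y h1]
  exact condMI_nonneg p X Y _ hp

end Core

section Ident
variable {α β γ δ : Type} [Fintype α] [DecidableEq α] [Fintype β] [DecidableEq β]
  [Fintype γ] [DecidableEq γ] [Fintype δ] [DecidableEq δ]
variable (p : Ω → ℝ)

lemma ident_swap (U : Ω → α) (V : Ω → β) (Q : Ω → γ) :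
    condMI p U V Q - mi p U V = condMI p Q V U - mi p Q V := by
  have e1 : ent p (fun ω => (Q ω, U ω)) = ent p (fun ω => (U ω, Q ω)) :=
    ent_comp_inj p (f := fun t : α × γ => (t.2, t.1))
      (Function.LeftInverse.injective (g := fun t => (t.2, t.1)) fun _ => rfl)
      (fun ω => (U ω, Q ω))
  have e2 : ent p (fun ω => (V ω, U ω)) = ent p (fun ω => (U ω, V ω)) :=
    ent_comp_inj p (f := fun t : α × β => (t.2, t.1))
      (Function.LeftInverse.injective (g := fun t => (t.2, t.1)) fun _ => rfl)
      (fun ω => (U ω, V ω))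
  have e3 : ent p (fun ω => ((Q ω, V ω), U ω)) = ent p (fun ω => ((U ω, V ω), Q ω)) :=
    ent_comp_inj p (f := fun t : (α × β) × γ => ((t.2, t.1.2), t.1.1))
      (Function.LeftInverse.injective (g := fun t => ((t.2, t.1.2), t.1.1)) fun _ => rfl)
      (fun ω => ((U ω, V ω), Q ω))
  have e4 : ent p (fun ω => (Q ω, V ω)) = ent p (fun ω => (V ω, Q ω)) :=
    ent_comp_inj p (f := fun t : β × γ => (t.2, t.1))
      (Function.LeftInverse.injective (g := fun t => (t.2, t.1)) fun _ => rfl)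
      (fun ω => (V ω, Q ω))
  simp only [condMI, condEnt, mi]
  rw [e1, e2, e3, e4]
  ring

lemma ident_chain (Q : Ω → α) (B : Ω → β) (C : Ω → γ) (U : Ω → δ) :
    condMI p Q (fun ω => (B ω, C ω)) U
      = condMI p Q C U + condMI p Q B (fun ω => (C ω, U ω)) := by
  have f1 : ent p (fun ω => (Q ω, (C ω, U ω))) = ent p (fun ω => ((Q ω, C ω), U ω)) :=
    ent_comp_inj p (f := fun t : (α × γ) × δ => (t.1.1, (t.1.2, t.2)))
      (Function.LeftInverse.injective (g := fun t => ((t.1, t.2.1), t.2.2)) fun _ => rfl)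
      (fun ω => ((Q ω, C ω), U ω))
  have f2 : ent p (fun ω => (B ω, (C ω, U ω))) = ent p (fun ω => ((B ω, C ω), U ω)) :=
    ent_comp_inj p (f := fun t : (β × γ) × δ => (t.1.1, (t.1.2, t.2)))
      (Function.LeftInverse.injective (g := fun t => ((t.1, t.2.1), t.2.2)) fun _ => rfl)
      (fun ω => ((B ω, C ω), U ω))
  have f3 : ent p (fun ω => ((Q ω, B ω), (C ω, U ω)))
      = ent p (fun ω => ((Q ω, (B ω, C ω)), U ω)) :=
    ent_comp_inj p (f := fun t : (α × β × γ) × δ => ((t.1.1, t.1.2.1), (t.1.2.2, t.2)))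
      (Function.LeftInverse.injective
        (g := fun t => ((t.1.1, t.1.2, t.2.1), t.2.2)) fun _ => rfl)
      (fun ω => ((Q ω, (B ω, C ω)), U ω))
  simp only [condMI, condEnt]
  rw [f1, f2, f3]
  ring

lemma condMI_swapY (Q : Ω → α) (B : Ω → β) (C : Ω → γ) (U : Ω → δ) :
    condMI p Q (fun ω => (B ω, C ω)) U = condMI p Q (fun ω => (C ω, B ω)) U := by
  have g1 : ent p (fun ω => ((C ω, B ω), U ω)) = ent p (fun ω => ((B ω, C ω), U ω)) :=
    ent_comp_inj p (f := fun t : (β × γ) × δ => ((t.1.2, t.1.1), t.2))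
      (Function.LeftInverse.injective (g := fun t => ((t.1.2, t.1.1), t.2)) fun _ => rfl)
      (fun ω => ((B ω, C ω), U ω))
  have g2 : ent p (fun ω => ((Q ω, (C ω, B ω)), U ω))
      = ent p (fun ω => ((Q ω, (B ω, C ω)), U ω)) :=
    ent_comp_inj p (f := fun t : (α × β × γ) × δ => ((t.1.1, (t.1.2.2, t.1.2.1)), t.2))
      (Function.LeftInverse.injective
        (g := fun t => ((t.1.1, (t.1.2.2, t.1.2.1)), t.2)) fun _ => rfl)
      (fun ω => ((Q ω, (B ω, C ω)), U ω))
  simp only [condMI, condEnt]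
  rw [g1, g2]

lemma ident2 (W : Ω → α) (E : Ω → β) (A : Ω → γ) (Q : Ω → δ) :
    condMI p W E (fun ω => (A ω, Q ω)) - condMI p W E A
      = condMI p Q E (fun ω => (A ω, W ω)) - condMI p Q E A := by
  have g1 : ent p (fun ω => (Q ω, (A ω, W ω))) = ent p (fun ω => (W ω, (A ω, Q ω))) :=
    ent_comp_inj p (f := fun t : α × γ × δ => (t.2.2, (t.2.1, t.1)))
      (Function.LeftInverse.injective (g := fun t => (t.2.2, (t.2.1, t.1))) fun _ => rfl)
      (fun ω => (W ω, (A ω, Q ω)))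
  have g2 : ent p (fun ω => ((Q ω, E ω), A ω)) = ent p (fun ω => (E ω, (A ω, Q ω))) :=
    ent_comp_inj p (f := fun t : β × γ × δ => ((t.2.2, t.1), t.2.1))
      (Function.LeftInverse.injective (g := fun t => (t.1.2, (t.2, t.1.1))) fun _ => rfl)
      (fun ω => (E ω, (A ω, Q ω)))
  have g3 : ent p (fun ω => (E ω, (A ω, W ω))) = ent p (fun ω => ((W ω, E ω), A ω)) :=
    ent_comp_inj p (f := fun t : (α × β) × γ => (t.1.2, (t.2, t.1.1)))
      (Function.LeftInverse.injective (g := fun t => ((t.2.2, t.1), t.2.1)) fun _ => rfl)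
      (fun ω => ((W ω, E ω), A ω))
  have g4 : ent p (fun ω => ((Q ω, E ω), (A ω, W ω)))
      = ent p (fun ω => ((W ω, E ω), (A ω, Q ω))) :=
    ent_comp_inj p (f := fun t : (α × β) × γ × δ => ((t.2.2, t.1.2), (t.2.1, t.1.1)))
      (Function.LeftInverse.injective
        (g := fun t => ((t.2.2, t.1.2), (t.2.1, t.1.1))) fun _ => rfl)
      (fun ω => ((W ω, E ω), (A ω, Q ω)))
  have g5 : ent p (fun ω => (Q ω, A ω)) = ent p (fun ω => (A ω, Q ω)) :=
    ent_comp_inj p (f := fun t : γ × δ => (t.2, t.1))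
      (Function.LeftInverse.injective (g := fun t => (t.2, t.1)) fun _ => rfl)
      (fun ω => (A ω, Q ω))
  have g6 : ent p (fun ω => (A ω, W ω)) = ent p (fun ω => (W ω, A ω)) :=
    ent_comp_inj p (f := fun t : α × γ => (t.2, t.1))
      (Function.LeftInverse.injective (g := fun t => (t.2, t.1)) fun _ => rfl)
      (fun ω => (W ω, A ω))
  simp only [condMI, condEnt]
  rw [g1, g2, g3, g4, g5, g6]
  ring

end Ident

end IT

section TimeSharing
variable {Qt At Et Dt Xt Yt : Type}
  [Fintype Qt] [DecidableEq Qt] [Fintype At] [DecidableEq At]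
  [Fintype Et] [DecidableEq Et] [Fintype Dt] [DecidableEq Dt]
  [Fintype Xt] [DecidableEq Xt] [Fintype Yt] [DecidableEq Yt]

/-- `I(A,X; Y,S_d | Q) − I(X; S_e | A,Q) ≤ I(A,X; Y,S_d) − I(X; S_e | A)`. -/
theorem stmt16
    (p : Qt × At × Et × Dt × Xt × Yt → ℝ)
    (PQ : Qt → ℝ) (PA : At → Qt → ℝ) (PS : Et × Dt → At → ℝ)
    (PX : Xt → At → Et → Qt → ℝ) (PY : Yt → Xt → Et → Dt → ℝ)
    (hPQ0 : ∀ q, 0 ≤ PQ q) (hPQ1 : ∑ q, PQ q = 1)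
    (hPA0 : ∀ a q, 0 ≤ PA a q) (hPA1 : ∀ q, ∑ a, PA a q = 1)
    (hPS0 : ∀ s a, 0 ≤ PS s a) (hPS1 : ∀ a, ∑ s, PS s a = 1)
    (hPX0 : ∀ x a e q, 0 ≤ PX x a e q) (hPX1 : ∀ a e q, ∑ x, PX x a e q = 1)
    (hPY0 : ∀ y x e d, 0 ≤ PY y x e d) (hPY1 : ∀ x e d, ∑ y, PY y x e d = 1)
    (hfac : ∀ q a e d x y,
      p (q, a, e, d, x, y) = PQ q * PA a q * PS (e, d) a * PX x a e q * PY y x e d) :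
    IT.condMI p (fun ω => (ω.2.1, ω.2.2.2.2.1)) (fun ω => (ω.2.2.2.2.2, ω.2.2.2.1))
        (fun ω => ω.1)
      - IT.condMI p (fun ω => ω.2.2.2.2.1) (fun ω => ω.2.2.1) (fun ω => (ω.2.1, ω.1))
    ≤ IT.mi p (fun ω => (ω.2.1, ω.2.2.2.2.1)) (fun ω => (ω.2.2.2.2.2, ω.2.2.2.1))
      - IT.condMI p (fun ω => ω.2.2.2.2.1) (fun ω => ω.2.2.1) (fun ω => ω.2.1) := by
  have hp0 : ∀ ω : Qt × At × Et × Dt × Xt × Yt, 0 ≤ p ω := by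
    rintro ⟨q, a, e, d, x, y⟩
    rw [hfac]
    exact mul_nonneg (mul_nonneg (mul_nonneg (mul_nonneg (hPQ0 q) (hPA0 a q))
      (hPS0 (e, d) a)) (hPX0 x a e q)) (hPY0 y x e d)
  have hSd1 : ∀ a, (∑ e, ∑ d, PS (e, d) a) = 1 := by
    intro a
    rw [← Fintype.sum_prod_type (f := fun s : Et × Dt => PS s a)]
    exact hPS1 a
  have hp1 : ∑ ω, p ω = 1 := by
    simp only [Fintype.sum_prod_type, hfac]
    have h1 : ∀ q a e d x, (∑ y, PQ q * PA a q * PS (e, d) a * PX x a e q * PY y x e d)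
        = PQ q * PA a q * PS (e, d) a * PX x a e q := fun q a e d x => by
      rw [← Finset.mul_sum, hPY1, mul_one]
    simp_rw [h1]
    have h2 : ∀ q a e d, (∑ x, PQ q * PA a q * PS (e, d) a * PX x a e q)
        = PQ q * PA a q * PS (e, d) a := fun q a e d => by
      rw [← Finset.mul_sum, hPX1, mul_one]
    simp_rw [h2]
    have h3 : ∀ q a, (∑ e, ∑ d, PQ q * PA a q * PS (e, d) a) = PQ q * PA a q := by
      intro q a
      simp_rw [← Finset.mul_sum]
      rw [hSd1, mul_one]
    simp_rw [h3]
    have h4 : ∀ q, (∑ a, PQ q * PA a q) = PQ q := fun q => by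
      rw [← Finset.mul_sum, hPA1, mul_one]
    simp_rw [h4]
    exact hPQ1
  -- full marginal, grouping (q, (y,d), (e,a,x))
  have m7 : ∀ (q : Qt) (a : At) (e : Et) (d : Dt) (x : Xt) (y : Yt),
      IT.marg p (fun ω => (ω.1, (ω.2.2.2.2.2, ω.2.2.2.1), (ω.2.2.1, ω.2.1, ω.2.2.2.2.1)))
        (q, (y, d), (e, a, x))
      = PQ q * PA a q * PS (e, d) a * PX x a e q * PY y x e d := by
    intro q a e d x y
    have h := IT.marg_comp_inj (p := p)
      (f := fun ω : Qt × At × Et × Dt × Xt × Yt =>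
        (ω.1, (ω.2.2.2.2.2, ω.2.2.2.1), (ω.2.2.1, ω.2.1, ω.2.2.2.2.1)))
      (Function.LeftInverse.injective
        (g := fun t => (t.1, t.2.2.2.1, t.2.2.1, t.2.1.2, t.2.2.2.2, t.2.1.1)) fun _ => rfl)
      (fun ω => ω) (q, a, e, d, x, y)
    rw [IT.marg_id p] at h
    rw [hfac q a e d x y] at h
    exact h
  -- full marginal, grouping (q, (d,x,y), (e,a))
  have m7' : ∀ (q : Qt) (a : At) (e : Et) (d : Dt) (x : Xt) (y : Yt),
      IT.marg p (fun ω => (ω.1, (ω.2.2.2.1, ω.2.2.2.2.1, ω.2.2.2.2.2), (ω.2.2.1, ω.2.1)))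
        (q, (d, x, y), (e, a))
      = PQ q * PA a q * PS (e, d) a * PX x a e q * PY y x e d := by
    intro q a e d x y
    have h := IT.marg_comp_inj (p := p)
      (f := fun ω : Qt × At × Et × Dt × Xt × Yt =>
        (ω.1, (ω.2.2.2.1, ω.2.2.2.2.1, ω.2.2.2.2.2), (ω.2.2.1, ω.2.1)))
      (Function.LeftInverse.injective
        (g := fun t => (t.1, t.2.2.2, t.2.2.1, t.2.1.1, t.2.1.2.1, t.2.1.2.2)) fun _ => rfl)
      (fun ω => ω) (q, a, e, d, x, y)
    rw [IT.marg_id p] at h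
    rw [hfac q a e d x y] at h
    exact h
  -- marginals for Q - E | A
  have vQEA : ∀ q e a, IT.marg p (fun ω => (ω.1, ω.2.2.1, ω.2.1)) (q, e, a)
      = PQ q * PA a q * ∑ d, PS (e, d) a := by
    intro q e a
    refine (IT.marg_proj_XZ p (fun ω => ω.1)
      (fun ω => (ω.2.2.2.1, ω.2.2.2.2.1, ω.2.2.2.2.2)) (fun ω => (ω.2.2.1, ω.2.1))
      q (e, a)).trans ?_
    show (∑ b : Dt × Xt × Yt,
      IT.marg p (fun ω => (ω.1, (ω.2.2.2.1, ω.2.2.2.2.1, ω.2.2.2.2.2), (ω.2.2.1, ω.2.1)))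
        (q, b, (e, a))) = _
    simp only [Fintype.sum_prod_type]
    simp only [m7']
    calc ∑ d, ∑ x, ∑ y, PQ q * PA a q * PS (e, d) a * PX x a e q * PY y x e d
        = ∑ d, ∑ x, PQ q * PA a q * PS (e, d) a * PX x a e q :=
          Finset.sum_congr rfl fun d _ => Finset.sum_congr rfl fun x _ => by
            rw [← Finset.mul_sum, hPY1, mul_one]
      _ = ∑ d, PQ q * PA a q * PS (e, d) a :=
          Finset.sum_congr rfl fun d _ => by rw [← Finset.mul_sum, hPX1, mul_one]
      _ = ∑ d, PQ q * PA a q * PS (e, d) a * 1 := by simp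
      _ = PQ q * PA a q * ∑ d, PS (e, d) a := by
          rw [Finset.mul_sum]
          exact Finset.sum_congr rfl fun d _ => by ring
  have vQA : ∀ q a, IT.marg p (fun ω => (ω.1, ω.2.1)) (q, a) = PQ q * PA a q := by
    intro q a
    refine (IT.marg_proj_XZ p (fun ω => ω.1) (fun ω => ω.2.2.1) (fun ω => ω.2.1)
      q a).trans ?_
    show (∑ e, IT.marg p (fun ω => (ω.1, ω.2.2.1, ω.2.1)) (q, e, a)) = _
    simp only [vQEA]
    rw [← Finset.mul_sum, hSd1, mul_one]
  have vEA : ∀ e a, IT.marg p (fun ω => (ω.2.2.1, ω.2.1)) (e, a)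
      = (∑ d, PS (e, d) a) * ∑ q', PQ q' * PA a q' := by
    intro e a
    refine (IT.marg_proj_YZ p (fun ω => ω.1) (fun ω => ω.2.2.1) (fun ω => ω.2.1)
      e a).trans ?_
    show (∑ q', IT.marg p (fun ω => (ω.1, ω.2.2.1, ω.2.1)) (q', e, a)) = _
    simp only [vQEA]
    calc ∑ q', PQ q' * PA a q' * ∑ d, PS (e, d) a
        = ∑ q', (∑ d, PS (e, d) a) * (PQ q' * PA a q') :=
          Finset.sum_congr rfl fun q' _ => by ring
      _ = (∑ d, PS (e, d) a) * ∑ q', PQ q' * PA a q' := by rw [← Finset.mul_sum]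
  have vA : ∀ a, IT.marg p (fun ω => ω.2.1) a = ∑ q', PQ q' * PA a q' := by
    intro a
    refine (IT.marg_proj_snd p (fun ω => ω.2.1) (fun ω => ω.1) a).trans ?_
    show (∑ q', IT.marg p (fun ω => (ω.1, ω.2.1)) (q', a)) = _
    simp only [vQA]
  have hC1 : IT.CondIndep p (fun ω => ω.1) (fun ω => ω.2.2.1) (fun ω => ω.2.1) := by
    intro q e a
    show IT.marg p (fun ω => (ω.1, ω.2.1)) (q, a)
        * IT.marg p (fun ω => (ω.2.2.1, ω.2.1)) (e, a)
      = IT.marg p (fun ω => (ω.1, ω.2.2.1, ω.2.1)) (q, e, a)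
        * IT.marg p (fun ω => ω.2.1) a
    rw [vQA, vEA, vQEA, vA]
    ring
  -- marginals for Q - (Y,D) | (E,A,X)
  have vQZ : ∀ q e a x, IT.marg p (fun ω => (ω.1, ω.2.2.1, ω.2.1, ω.2.2.2.2.1)) (q, e, a, x)
      = PQ q * PA a q * PX x a e q * ∑ d, PS (e, d) a := by
    intro q e a x
    refine (IT.marg_proj_XZ p (fun ω => ω.1) (fun ω => (ω.2.2.2.2.2, ω.2.2.2.1))
      (fun ω => (ω.2.2.1, ω.2.1, ω.2.2.2.2.1)) q (e, a, x)).trans ?_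
    show (∑ b : Yt × Dt,
      IT.marg p (fun ω => (ω.1, (ω.2.2.2.2.2, ω.2.2.2.1), (ω.2.2.1, ω.2.1, ω.2.2.2.2.1)))
        (q, b, (e, a, x))) = _
    simp only [Fintype.sum_prod_type]
    simp only [m7]
    rw [Finset.sum_comm]
    calc ∑ d, ∑ y, PQ q * PA a q * PS (e, d) a * PX x a e q * PY y x e d
        = ∑ d, PQ q * PA a q * PS (e, d) a * PX x a e q :=
          Finset.sum_congr rfl fun d _ => by rw [← Finset.mul_sum, hPY1, mul_one]
      _ = ∑ d, (PQ q * PA a q * PX x a e q) * PS (e, d) a :=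
          Finset.sum_congr rfl fun d _ => by ring
      _ = PQ q * PA a q * PX x a e q * ∑ d, PS (e, d) a := by rw [← Finset.mul_sum]
  have vVZ : ∀ y d e a x, IT.marg p
      (fun ω => ((ω.2.2.2.2.2, ω.2.2.2.1), ω.2.2.1, ω.2.1, ω.2.2.2.2.1)) ((y, d), (e, a, x))
      = PS (e, d) a * PY y x e d * ∑ q', PQ q' * PA a q' * PX x a e q' := by
    intro y d e a x
    refine (IT.marg_proj_YZ p (fun ω => ω.1) (fun ω => (ω.2.2.2.2.2, ω.2.2.2.1))
      (fun ω => (ω.2.2.1, ω.2.1, ω.2.2.2.2.1)) (y, d) (e, a, x)).trans ?_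
    show (∑ q',
      IT.marg p (fun ω => (ω.1, (ω.2.2.2.2.2, ω.2.2.2.1), (ω.2.2.1, ω.2.1, ω.2.2.2.2.1)))
        (q', (y, d), (e, a, x))) = _
    simp only [m7]
    calc ∑ q', PQ q' * PA a q' * PS (e, d) a * PX x a e q' * PY y x e d
        = ∑ q', (PS (e, d) a * PY y x e d) * (PQ q' * PA a q' * PX x a e q') :=
          Finset.sum_congr rfl fun q' _ => by ring
      _ = PS (e, d) a * PY y x e d * ∑ q', PQ q' * PA a q' * PX x a e q' := by
          rw [← Finset.mul_sum]
  have vZ : ∀ e a x, IT.marg p (fun ω => (ω.2.2.1, ω.2.1, ω.2.2.2.2.1)) (e, a, x)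
      = (∑ d, PS (e, d) a) * ∑ q', PQ q' * PA a q' * PX x a e q' := by
    intro e a x
    refine (IT.marg_proj_snd p (fun ω => (ω.2.2.1, ω.2.1, ω.2.2.2.2.1)) (fun ω => ω.1)
      (e, a, x)).trans ?_
    show (∑ q', IT.marg p (fun ω => (ω.1, ω.2.2.1, ω.2.1, ω.2.2.2.2.1)) (q', e, a, x)) = _
    simp only [vQZ]
    calc ∑ q', PQ q' * PA a q' * PX x a e q' * ∑ d, PS (e, d) a
        = ∑ q', (∑ d, PS (e, d) a) * (PQ q' * PA a q' * PX x a e q') :=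
          Finset.sum_congr rfl fun q' _ => by ring
      _ = (∑ d, PS (e, d) a) * ∑ q', PQ q' * PA a q' * PX x a e q' := by
          rw [← Finset.mul_sum]
  have hC2 : IT.CondIndep p (fun ω => ω.1) (fun ω => (ω.2.2.2.2.2, ω.2.2.2.1))
      (fun ω => (ω.2.2.1, ω.2.1, ω.2.2.2.2.1)) := by
    intro q b c
    obtain ⟨y, d⟩ := b
    obtain ⟨e, a, x⟩ := c
    show IT.marg p (fun ω => (ω.1, ω.2.2.1, ω.2.1, ω.2.2.2.2.1)) (q, e, a, x)
        * IT.marg p (fun ω => ((ω.2.2.2.2.2, ω.2.2.2.1), ω.2.2.1, ω.2.1, ω.2.2.2.2.1))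
            ((y, d), (e, a, x))
      = IT.marg p
          (fun ω => (ω.1, (ω.2.2.2.2.2, ω.2.2.2.1), (ω.2.2.1, ω.2.1, ω.2.2.2.2.1)))
          (q, (y, d), (e, a, x))
        * IT.marg p (fun ω => (ω.2.2.1, ω.2.1, ω.2.2.2.2.1)) (e, a, x)
    rw [vQZ, vVZ, m7, vZ]
    ring
  -- assemble
  have h_swap : IT.condMI p (fun ω => (ω.2.1, ω.2.2.2.2.1))
        (fun ω => (ω.2.2.2.2.2, ω.2.2.2.1)) (fun ω => ω.1)
      - IT.mi p (fun ω => (ω.2.1, ω.2.2.2.2.1)) (fun ω => (ω.2.2.2.2.2, ω.2.2.2.1))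
      = IT.condMI p (fun ω => ω.1) (fun ω => (ω.2.2.2.2.2, ω.2.2.2.1))
          (fun ω => (ω.2.1, ω.2.2.2.2.1))
      - IT.mi p (fun ω => ω.1) (fun ω => (ω.2.2.2.2.2, ω.2.2.2.1)) :=
    IT.ident_swap p _ _ _
  have h_id2 : IT.condMI p (fun ω => ω.2.2.2.2.1) (fun ω => ω.2.2.1) (fun ω => (ω.2.1, ω.1))
      - IT.condMI p (fun ω => ω.2.2.2.2.1) (fun ω => ω.2.2.1) (fun ω => ω.2.1)
      = IT.condMI p (fun ω => ω.1) (fun ω => ω.2.2.1) (fun ω => (ω.2.1, ω.2.2.2.2.1))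
      - IT.condMI p (fun ω => ω.1) (fun ω => ω.2.2.1) (fun ω => ω.2.1) :=
    IT.ident2 p _ _ _ _
  have h_ch1 : IT.condMI p (fun ω => ω.1)
        (fun ω => ((ω.2.2.2.2.2, ω.2.2.2.1), ω.2.2.1)) (fun ω => (ω.2.1, ω.2.2.2.2.1))
      = IT.condMI p (fun ω => ω.1) (fun ω => ω.2.2.1) (fun ω => (ω.2.1, ω.2.2.2.2.1))
      + IT.condMI p (fun ω => ω.1) (fun ω => (ω.2.2.2.2.2, ω.2.2.2.1))
          (fun ω => (ω.2.2.1, ω.2.1, ω.2.2.2.2.1)) :=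
    IT.ident_chain p _ _ _ _
  have h_ch2 : IT.condMI p (fun ω => ω.1)
        (fun ω => (ω.2.2.1, (ω.2.2.2.2.2, ω.2.2.2.1))) (fun ω => (ω.2.1, ω.2.2.2.2.1))
      = IT.condMI p (fun ω => ω.1) (fun ω => (ω.2.2.2.2.2, ω.2.2.2.1))
          (fun ω => (ω.2.1, ω.2.2.2.2.1))
      + IT.condMI p (fun ω => ω.1) (fun ω => ω.2.2.1)
          (fun ω => ((ω.2.2.2.2.2, ω.2.2.2.1), ω.2.1, ω.2.2.2.2.1)) :=
    IT.ident_chain p _ _ _ _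
  have h_sw : IT.condMI p (fun ω => ω.1)
        (fun ω => ((ω.2.2.2.2.2, ω.2.2.2.1), ω.2.2.1)) (fun ω => (ω.2.1, ω.2.2.2.2.1))
      = IT.condMI p (fun ω => ω.1)
        (fun ω => (ω.2.2.1, (ω.2.2.2.2.2, ω.2.2.2.1))) (fun ω => (ω.2.1, ω.2.2.2.2.1)) :=
    IT.condMI_swapY p _ _ _ _
  have h_z1 : IT.condMI p (fun ω => ω.1) (fun ω => ω.2.2.1) (fun ω => ω.2.1) = 0 :=
    IT.condMI_eq_zero_of_condIndep p _ _ _ hp0 hC1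
  have h_z2 : IT.condMI p (fun ω => ω.1) (fun ω => (ω.2.2.2.2.2, ω.2.2.2.1))
      (fun ω => (ω.2.2.1, ω.2.1, ω.2.2.2.2.1)) = 0 :=
    IT.condMI_eq_zero_of_condIndep p _ _ _ hp0 hC2
  have h_n1 : 0 ≤ IT.mi p (fun ω => ω.1) (fun ω => (ω.2.2.2.2.2, ω.2.2.2.1)) :=
    IT.mi_nonneg p _ _ hp0 hp1
  have h_n2 : 0 ≤ IT.condMI p (fun ω => ω.1) (fun ω => ω.2.2.1)
      (fun ω => ((ω.2.2.2.2.2, ω.2.2.2.1), ω.2.1, ω.2.2.2.2.1)) :=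
    IT.condMI_nonneg p _ _ _ hp0
  linarith

end TimeSharing
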